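/- Symmetry preservation of path attributions: let f : ℝⁿ → ℝ be continuously differentiable and symmetric in coordinates i and j (f(σ(z)) = f(z) for all z, where σ swaps the i-th and j-th coordinates), and let γ : [0,1] → ℝⁿ be a continuously differentiable path with γ(0) = x̄, γ(1) = x, whose i-th and j-th components coincide: γ_i(t) = γ_j(t) for all t ∈ [0,1]. Then the attributions to coordinates i and j are equal: A_i^γ(x) = A_j^γ(x). -/

import Mathlib

open Set MeasureTheory

/-- The `i`-th partial derivative of `f : ℝⁿ → ℝ` at `z`. -/
noncomputable def partialD (n : ℕ) (f : (Fin n → ℝ) → ℝ) (z : Fin n → ℝ) (i : Fin n) : ℝ :=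
  fderiv ℝ f z (Pi.single i 1)

/-- The path attribution of coordinate `i`:
`A_i^γ = ∫₀¹ (∂f/∂x_i)(γ(t)) · γ̇_i(t) dt`. -/
noncomputable def pathAttr (n : ℕ) (f : (Fin n → ℝ) → ℝ) (γ : ℝ → Fin n → ℝ) (i : Fin n) : ℝ :=
  ∫ t in (0:ℝ)..1, partialD n f (γ t) i * deriv γ t i

/-- Swapping coordinates as a continuous linear map. -/
noncomputable def swapCLM (n : ℕ) (i j : Fin n) : (Fin n → ℝ) →L[ℝ] (Fin n → ℝ) :=
  ContinuousLinearMap.pi (fun k => ContinuousLinearMap.proj (Equiv.swap i j k))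

lemma swapCLM_apply (n : ℕ) (i j : Fin n) (z : Fin n → ℝ) :
    swapCLM n i j z = z ∘ Equiv.swap i j := rfl

lemma partialD_symm (n : ℕ) (f : (Fin n → ℝ) → ℝ) (i j : Fin n)
    (hf : ContDiff ℝ 1 f)
    (hsym : ∀ z : Fin n → ℝ, f (z ∘ Equiv.swap i j) = f z)
    (z : Fin n → ℝ) (hz : z i = z j) :
    partialD n f z i = partialD n f z j := by
  have hdf : Differentiable ℝ f := hf.differentiable one_ne_zero
  have hσz : swapCLM n i j z = z := by
    funext k
    rw [swapCLM_apply]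
    rcases eq_or_ne k i with rfl | hki
    · simp [Equiv.swap_apply_left, Function.comp, hz]
    rcases eq_or_ne k j with rfl | hkj
    · simp [Equiv.swap_apply_right, Function.comp, hz]
    · simp [Equiv.swap_apply_of_ne_of_ne hki hkj, Function.comp]
  have hfcomp : f ∘ (swapCLM n i j) = f := by
    funext w; simp [Function.comp, swapCLM_apply, hsym]
  have hfd : fderiv ℝ (f ∘ (swapCLM n i j)) z
      = (fderiv ℝ f (swapCLM n i j z)).comp (swapCLM n i j) := by
    have h := fderiv_comp z (hdf _) (swapCLM n i j).differentiableAt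
    rwa [ContinuousLinearMap.fderiv] at h
  rw [hfcomp, hσz] at hfd
  have hsingle : swapCLM n i j (Pi.single i 1) = Pi.single j 1 := by
    funext k
    rw [swapCLM_apply]
    rcases eq_or_ne k j with rfl | hkj
    · simp only [Function.comp_apply]
      rw [Equiv.swap_apply_right]
      simp [Pi.single_eq_same]
    · have : Equiv.swap i j k ≠ i := by
        intro h
        apply hkj
        have := congrArg (Equiv.swap i j) h
        simpa [Equiv.swap_apply_left] using this
      simp [Function.comp, Pi.single_eq_of_ne this, Pi.single_eq_of_ne hkj]
  unfold partialD
  conv_lhs => rw [hfd]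
  rw [ContinuousLinearMap.comp_apply, hsingle]

/-- Symmetry preservation of path attributions: if `f` is symmetric in coordinates `i`
and `j`, and the `i`-th and `j`-th components of the path coincide on `[0,1]`, then the
attributions to coordinates `i` and `j` are equal. -/
theorem path_attributions_symmetry_preserving
    (n : ℕ) (f : (Fin n → ℝ) → ℝ) (γ : ℝ → Fin n → ℝ) (xbar x : Fin n → ℝ)
    (i j : Fin n) (hij : i ≠ j)
    (hf : ContDiff ℝ 1 f) (hγ : ContDiff ℝ 1 γ)
    (h0 : γ 0 = xbar) (h1 : γ 1 = x)
    (hsym : ∀ z : Fin n → ℝ, f (z ∘ Equiv.swap i j) = f z)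
    (hcomp : ∀ t ∈ Icc (0:ℝ) 1, γ t i = γ t j) :
    pathAttr n f γ i = pathAttr n f γ j := by
  unfold pathAttr
  apply intervalIntegral.integral_congr_ae
  have hone : ∀ᵐ t : ℝ, t ≠ 1 := by
    have : (volume : Measure ℝ) {(1:ℝ)} = 0 := measure_singleton 1
    exact ae_iff.2 (by simpa using this)
  filter_upwards [hone] with t ht1 htmem
  have htIoo : t ∈ Ioo (0:ℝ) 1 := by
    rw [Set.uIoc_of_le (by norm_num : (0:ℝ) ≤ 1)] at htmem
    exact ⟨htmem.1, lt_of_le_of_ne htmem.2 ht1⟩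
  have hP : partialD n f (γ t) i = partialD n f (γ t) j :=
    partialD_symm n f i j hf hsym (γ t) (hcomp t (Ioo_subset_Icc_self htIoo))
  have hD : deriv γ t i = deriv γ t j := by
    have hγd : DifferentiableAt ℝ γ t := (hγ.differentiable one_ne_zero) t
    have hi : HasDerivAt (fun s => γ s i) (deriv γ t i) t := by
      have := hγd.hasDerivAt
      exact (ContinuousLinearMap.proj (R := ℝ) (φ := fun _ : Fin n => ℝ) i).hasFDerivAt.comp_hasDerivAt t this
    have hj : HasDerivAt (fun s => γ s j) (deriv γ t j) t := by
      have := hγd.hasDerivAt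
      exact (ContinuousLinearMap.proj (R := ℝ) (φ := fun _ : Fin n => ℝ) j).hasFDerivAt.comp_hasDerivAt t this
    have heq : (fun s => γ s i) =ᶠ[nhds t] (fun s => γ s j) := by
      filter_upwards [Ioo_mem_nhds htIoo.1 htIoo.2] with s hs
      exact hcomp s (Ioo_subset_Icc_self hs)
    have := hi.deriv
    have hj' := hj.deriv
    calc deriv γ t i = deriv (fun s => γ s i) t := this.symm
      _ = deriv (fun s => γ s j) t := heq.deriv_eq
      _ = deriv γ t j := hj'
  rw [hP, hD]
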